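/- Every infinite geodesic word in the discrete Heisenberg group H₃ with generating set S = {a,b,a⁻¹,b⁻¹} either has exactly two elements of S occurring infinitely often with all its letters drawn from at most two elements of S, or consists of a finite prefix followed by infinitely many repetitions of a single letter. Equivalently: no infinite geodesic word uses three or more elements of S as letters with at least two occurring infinitely often. -/

import Mathlib

/-- The discrete Heisenberg group `H₃`: `⟨x, y, z⟩` encodes the 3×3 upper unitriangular
integer matrix `(1 x z; 0 1 y; 0 0 1)`, with matrix multiplication. -/
@[ext] structure Heis where
  x : ℤ
  y : ℤ
  z : ℤ

namespace Heis

instance : Mul Heis := ⟨fun p q => ⟨p.x + q.x, p.y + q.y, p.z + q.z + p.x * q.y⟩⟩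
instance : One Heis := ⟨⟨0, 0, 0⟩⟩
instance : Inv Heis := ⟨fun p => ⟨-p.x, -p.y, p.x * p.y - p.z⟩⟩

theorem mul_def (p q : Heis) :
    p * q = ⟨p.x + q.x, p.y + q.y, p.z + q.z + p.x * q.y⟩ := rfl
theorem one_def : (1 : Heis) = ⟨0, 0, 0⟩ := rfl
theorem inv_def (p : Heis) : p⁻¹ = ⟨-p.x, -p.y, p.x * p.y - p.z⟩ := rfl

instance : Group Heis where
  mul_assoc p q r := by
    simp only [mul_def, mk.injEq]
    refine ⟨by ring, by ring, by ring⟩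
  one_mul p := by
    obtain ⟨px, py, pz⟩ := p
    simp only [one_def, mul_def, mk.injEq]
    refine ⟨by ring, by ring, by ring⟩
  mul_one p := by
    obtain ⟨px, py, pz⟩ := p
    simp only [one_def, mul_def, mk.injEq]
    refine ⟨by ring, by ring, by ring⟩
  inv_mul_cancel p := by
    obtain ⟨px, py, pz⟩ := p
    simp only [inv_def, mul_def, one_def, mk.injEq]
    refine ⟨by ring, by ring, by ring⟩

/-- The generator `a` (the elementary matrix with a `1` in position (1,2)). -/
def a : Heis := ⟨1, 0, 0⟩
/-- The generator `b` (the elementary matrix with a `1` in position (2,3)). -/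
def b : Heis := ⟨0, 1, 0⟩
/-- The commutator `c = [a,b] = a⁻¹b⁻¹ab` (the elementary matrix with a `1` in (1,3)). -/
def c : Heis := ⟨0, 0, 1⟩

/-- The standard generating set `S = {a, b, a⁻¹, b⁻¹}`. -/
def S : Set Heis := {a, b, a⁻¹, b⁻¹}

/-- The word metric for the generating set `S`: the length of the shortest word with
letters in `S` leading from `g` to `h` in the Cayley graph. -/
noncomputable def wdist (g h : Heis) : ℕ :=
  sInf {n | ∃ l : List Heis, (∀ s ∈ l, s ∈ S) ∧ l.length = n ∧ g * l.prod = h}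


end Heis

namespace Heis

/-! ### Basic letters and decidability -/

def ai : Heis := ⟨-1, 0, 0⟩
def bi : Heis := ⟨0, -1, 0⟩

instance : DecidableEq Heis := fun p q =>
  decidable_of_iff (p.x = q.x ∧ p.y = q.y ∧ p.z = q.z) (by
    constructor
    · rintro ⟨h1, h2, h3⟩; exact Heis.ext h1 h2 h3
    · rintro rfl; exact ⟨rfl, rfl, rfl⟩)

lemma a_inv_eq : a⁻¹ = ai := by simp [inv_def, a, ai]
lemma b_inv_eq : b⁻¹ = bi := by simp [inv_def, b, bi]

lemma mem_S_iff {s : Heis} : s ∈ S ↔ s = a ∨ s = b ∨ s = ai ∨ s = bi := by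
  simp [S, a_inv_eq, b_inv_eq, Set.mem_insert_iff, Set.mem_singleton_iff]

lemma a_mem_S : a ∈ S := mem_S_iff.mpr (Or.inl rfl)
lemma b_mem_S : b ∈ S := mem_S_iff.mpr (Or.inr (Or.inl rfl))
lemma ai_mem_S : ai ∈ S := mem_S_iff.mpr (Or.inr (Or.inr (Or.inl rfl)))
lemma bi_mem_S : bi ∈ S := mem_S_iff.mpr (Or.inr (Or.inr (Or.inr rfl)))

lemma a_ne_b : a ≠ b := by decide
lemma a_ne_ai : a ≠ ai := by decide
lemma a_ne_bi : a ≠ bi := by decide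
lemma b_ne_ai : b ≠ ai := by decide
lemma b_ne_bi : b ≠ bi := by decide
lemma ai_ne_bi : ai ≠ bi := by decide

/-! ### Coordinates of products -/

lemma x_mul (p q : Heis) : (p * q).x = p.x + q.x := rfl
lemma y_mul (p q : Heis) : (p * q).y = p.y + q.y := rfl
lemma z_mul (p q : Heis) : (p * q).z = p.z + q.z + p.x * q.y := rfl

lemma x_one : (1 : Heis).x = 0 := rfl
lemma y_one : (1 : Heis).y = 0 := rfl
lemma z_one : (1 : Heis).z = 0 := rfl

lemma prod_append_z (u v : List Heis) :
    (u ++ v).prod.z = u.prod.z + v.prod.z + u.prod.x * v.prod.y := by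
  rw [List.prod_append, z_mul]

lemma prod_append_x (u v : List Heis) : (u ++ v).prod.x = u.prod.x + v.prod.x := by
  rw [List.prod_append, x_mul]

lemma prod_append_y (u v : List Heis) : (u ++ v).prod.y = u.prod.y + v.prod.y := by
  rw [List.prod_append, y_mul]

lemma prod_cons_z (e : Heis) (l : List Heis) :
    (e :: l).prod.z = e.z + l.prod.z + e.x * l.prod.y := by
  rw [List.prod_cons, z_mul]

lemma prod_cons_x (e : Heis) (l : List Heis) : (e :: l).prod.x = e.x + l.prod.x := by
  rw [List.prod_cons, x_mul]

lemma prod_cons_y (e : Heis) (l : List Heis) : (e :: l).prod.y = e.y + l.prod.y := by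
  rw [List.prod_cons, y_mul]

/-- x-coordinate of a product equals (#a) − (#a⁻¹). -/
lemma coords_x (l : List Heis) (h : ∀ s ∈ l, s ∈ S) :
    l.prod.x = (l.count a : ℤ) - (l.count ai : ℤ) := by
  induction l with
  | nil => simp [x_one]
  | cons e t ih =>
    have he := h e (List.mem_cons_self (a := e) (l := t))
    have ht : ∀ s ∈ t, s ∈ S := fun s hs => h s (List.mem_cons_of_mem e hs)
    rw [prod_cons_x, ih ht]
    rcases mem_S_iff.mp he with rfl | rfl | rfl | rfl <;>
      simp [List.count_cons, a, b, ai, bi, a_ne_b, a_ne_ai, a_ne_bi, b_ne_ai, b_ne_bi,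
        ai_ne_bi, a_ne_b.symm, a_ne_ai.symm, a_ne_bi.symm, b_ne_ai.symm, b_ne_bi.symm,
        ai_ne_bi.symm] <;> push_cast <;> ring

lemma coords_y (l : List Heis) (h : ∀ s ∈ l, s ∈ S) :
    l.prod.y = (l.count b : ℤ) - (l.count bi : ℤ) := by
  induction l with
  | nil => simp [y_one]
  | cons e t ih =>
    have he := h e (List.mem_cons_self (a := e) (l := t))
    have ht : ∀ s ∈ t, s ∈ S := fun s hs => h s (List.mem_cons_of_mem e hs)
    rw [prod_cons_y, ih ht]
    rcases mem_S_iff.mp he with rfl | rfl | rfl | rfl <;>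
      simp [List.count_cons, a, b, ai, bi, a_ne_b, a_ne_ai, a_ne_bi, b_ne_ai, b_ne_bi,
        ai_ne_bi, a_ne_b.symm, a_ne_ai.symm, a_ne_bi.symm, b_ne_ai.symm, b_ne_bi.symm,
        ai_ne_bi.symm] <;> push_cast <;> ring

lemma length_eq_counts (l : List Heis) (h : ∀ s ∈ l, s ∈ S) :
    l.length = l.count a + l.count b + l.count ai + l.count bi := by
  induction l with
  | nil => simp
  | cons e t ih =>
    have he := h e (List.mem_cons_self (a := e) (l := t))
    have ht : ∀ s ∈ t, s ∈ S := fun s hs => h s (List.mem_cons_of_mem e hs)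
    rw [List.length_cons, ih ht]
    rcases mem_S_iff.mp he with rfl | rfl | rfl | rfl <;>
      simp [List.count_cons, a, b, ai, bi] <;> omega

end Heis
namespace Heis

lemma count_head (e : Heis) (t : List Heis) : (e :: t).count e = t.count e + 1 :=
  List.count_cons_self (a := e) (l := t)

lemma count_ne (f e : Heis) (t : List Heis) (h : f ≠ e) : (e :: t).count f = t.count f :=
  List.count_cons_of_ne h.symm (l := t)

/-- descent upper bound: no `a` ⟹ z ≤ (#a⁻¹)·(#b⁻¹) -/
lemma desc_z_ub (l : List Heis) (h : ∀ s ∈ l, s ∈ S) (hna : a ∉ l) :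
    l.prod.z ≤ (l.count ai : ℤ) * (l.count bi : ℤ) := by
  induction l with
  | nil => simp [z_one]
  | cons e t ih =>
    have ht : ∀ s ∈ t, s ∈ S := fun s hs => h s (List.mem_cons_of_mem e hs)
    have hnat : a ∉ t := fun hmem => hna (List.mem_cons_of_mem e hmem)
    have iht := ih ht hnat
    have hyt : t.prod.y = (t.count b : ℤ) - (t.count bi : ℤ) := coords_y t ht
    have hb0 : (0:ℤ) ≤ (t.count b : ℤ) := Int.natCast_nonneg _
    have hbi0 : (0:ℤ) ≤ (t.count bi : ℤ) := Int.natCast_nonneg _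
    have hai0 : (0:ℤ) ≤ (t.count ai : ℤ) := Int.natCast_nonneg _
    rw [prod_cons_z]
    rcases mem_S_iff.mp (h e (List.mem_cons_self (a := e) (l := t))) with rfl | rfl | rfl | rfl
    · exact absurd (List.mem_cons_self (a := a) (l := t)) hna
    · rw [count_ne ai b t b_ne_ai.symm, count_ne bi b t b_ne_bi.symm]
      show 0 + t.prod.z + 0 * t.prod.y ≤ _
      linarith [iht]
    · rw [count_head, count_ne bi ai t ai_ne_bi.symm]
      show 0 + t.prod.z + (-1) * t.prod.y ≤ _
      rw [hyt]; push_cast; nlinarith [iht]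
    · rw [count_ne ai bi t ai_ne_bi, count_head]
      show 0 + t.prod.z + 0 * t.prod.y ≤ _
      push_cast; nlinarith [iht]

/-- descent lower bound: no `a` ⟹ z ≥ −(#a⁻¹)·(#b) -/
lemma desc_z_lb (l : List Heis) (h : ∀ s ∈ l, s ∈ S) (hna : a ∉ l) :
    -((l.count ai : ℤ) * (l.count b : ℤ)) ≤ l.prod.z := by
  induction l with
  | nil => simp [z_one]
  | cons e t ih =>
    have ht : ∀ s ∈ t, s ∈ S := fun s hs => h s (List.mem_cons_of_mem e hs)
    have hnat : a ∉ t := fun hmem => hna (List.mem_cons_of_mem e hmem)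
    have iht := ih ht hnat
    have hyt : t.prod.y = (t.count b : ℤ) - (t.count bi : ℤ) := coords_y t ht
    have hb0 : (0:ℤ) ≤ (t.count b : ℤ) := Int.natCast_nonneg _
    have hbi0 : (0:ℤ) ≤ (t.count bi : ℤ) := Int.natCast_nonneg _
    have hai0 : (0:ℤ) ≤ (t.count ai : ℤ) := Int.natCast_nonneg _
    rw [prod_cons_z]
    rcases mem_S_iff.mp (h e (List.mem_cons_self (a := e) (l := t))) with rfl | rfl | rfl | rfl
    · exact absurd (List.mem_cons_self (a := a) (l := t)) hna
    · rw [count_ne ai b t b_ne_ai.symm, count_head]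
      show _ ≤ 0 + t.prod.z + 0 * t.prod.y
      push_cast; nlinarith [iht]
    · rw [count_head, count_ne b ai t b_ne_ai]
      show _ ≤ 0 + t.prod.z + (-1) * t.prod.y
      rw [hyt]; push_cast; nlinarith [iht]
    · rw [count_ne ai bi t ai_ne_bi, count_ne b bi t b_ne_bi]
      show _ ≤ 0 + t.prod.z + 0 * t.prod.y
      linarith [iht]

/-- ascent upper bound: no `a⁻¹` ⟹ z ≤ (#a)·(#b) -/
lemma asc_z_ub (l : List Heis) (h : ∀ s ∈ l, s ∈ S) (hna : ai ∉ l) :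
    l.prod.z ≤ (l.count a : ℤ) * (l.count b : ℤ) := by
  induction l with
  | nil => simp [z_one]
  | cons e t ih =>
    have ht : ∀ s ∈ t, s ∈ S := fun s hs => h s (List.mem_cons_of_mem e hs)
    have hnat : ai ∉ t := fun hmem => hna (List.mem_cons_of_mem e hmem)
    have iht := ih ht hnat
    have hyt : t.prod.y = (t.count b : ℤ) - (t.count bi : ℤ) := coords_y t ht
    have hb0 : (0:ℤ) ≤ (t.count b : ℤ) := Int.natCast_nonneg _
    have hbi0 : (0:ℤ) ≤ (t.count bi : ℤ) := Int.natCast_nonneg _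
    have ha0 : (0:ℤ) ≤ (t.count a : ℤ) := Int.natCast_nonneg _
    rw [prod_cons_z]
    rcases mem_S_iff.mp (h e (List.mem_cons_self (a := e) (l := t))) with rfl | rfl | rfl | rfl
    · rw [count_head, count_ne b a t a_ne_b.symm]
      show 0 + t.prod.z + 1 * t.prod.y ≤ _
      rw [hyt]; push_cast; nlinarith [iht]
    · rw [count_ne a b t a_ne_b, count_head]
      show 0 + t.prod.z + 0 * t.prod.y ≤ _
      push_cast; nlinarith [iht]
    · exact absurd (List.mem_cons_self (a := ai) (l := t)) hna
    · rw [count_ne a bi t a_ne_bi, count_ne b bi t b_ne_bi]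
      show 0 + t.prod.z + 0 * t.prod.y ≤ _
      linarith [iht]

/-- ascent lower bound: no `a⁻¹` ⟹ z ≥ −(#a)·(#b⁻¹) -/
lemma asc_z_lb (l : List Heis) (h : ∀ s ∈ l, s ∈ S) (hna : ai ∉ l) :
    -((l.count a : ℤ) * (l.count bi : ℤ)) ≤ l.prod.z := by
  induction l with
  | nil => simp [z_one]
  | cons e t ih =>
    have ht : ∀ s ∈ t, s ∈ S := fun s hs => h s (List.mem_cons_of_mem e hs)
    have hnat : ai ∉ t := fun hmem => hna (List.mem_cons_of_mem e hmem)
    have iht := ih ht hnat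
    have hyt : t.prod.y = (t.count b : ℤ) - (t.count bi : ℤ) := coords_y t ht
    have hb0 : (0:ℤ) ≤ (t.count b : ℤ) := Int.natCast_nonneg _
    have hbi0 : (0:ℤ) ≤ (t.count bi : ℤ) := Int.natCast_nonneg _
    have ha0 : (0:ℤ) ≤ (t.count a : ℤ) := Int.natCast_nonneg _
    rw [prod_cons_z]
    rcases mem_S_iff.mp (h e (List.mem_cons_self (a := e) (l := t))) with rfl | rfl | rfl | rfl
    · rw [count_head, count_ne bi a t a_ne_bi.symm]
      show _ ≤ 0 + t.prod.z + 1 * t.prod.y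
      rw [hyt]; push_cast; nlinarith [iht]
    · rw [count_ne a b t a_ne_b, count_ne bi b t b_ne_bi.symm]
      show _ ≤ 0 + t.prod.z + 0 * t.prod.y
      linarith [iht]
    · exact absurd (List.mem_cons_self (a := ai) (l := t)) hna
    · rw [count_ne a bi t a_ne_bi, count_head]
      show _ ≤ 0 + t.prod.z + 0 * t.prod.y
      push_cast; nlinarith [iht]

/-! ### products of constant runs -/

lemma prod_replicate_a (k : ℕ) : (List.replicate k a).prod = ⟨(k : ℤ), 0, 0⟩ := by
  induction k with
  | zero => simp [one_def]
  | succ n ih =>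
    rw [List.replicate_succ, List.prod_cons, ih, mul_def]
    simp only [a, mk.injEq]
    refine ⟨by push_cast; try ring, by push_cast; try ring, by push_cast; try ring⟩

lemma prod_replicate_b (k : ℕ) : (List.replicate k b).prod = ⟨0, (k : ℤ), 0⟩ := by
  induction k with
  | zero => simp [one_def]
  | succ n ih =>
    rw [List.replicate_succ, List.prod_cons, ih, mul_def]
    simp only [b, mk.injEq]
    refine ⟨by push_cast; try ring, by push_cast; try ring, by push_cast; try ring⟩

lemma prod_replicate_ai (k : ℕ) : (List.replicate k ai).prod = ⟨-(k : ℤ), 0, 0⟩ := by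
  induction k with
  | zero => simp [one_def]
  | succ n ih =>
    rw [List.replicate_succ, List.prod_cons, ih, mul_def]
    simp only [ai, mk.injEq]
    refine ⟨by push_cast; try ring, by push_cast; try ring, by push_cast; try ring⟩

lemma prod_replicate_bi (k : ℕ) : (List.replicate k bi).prod = ⟨0, -(k : ℤ), 0⟩ := by
  induction k with
  | zero => simp [one_def]
  | succ n ih =>
    rw [List.replicate_succ, List.prod_cons, ih, mul_def]
    simp only [bi, mk.injEq]
    refine ⟨by push_cast; try ring, by push_cast; try ring, by push_cast; try ring⟩

end Heis
namespace Heis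

/-! ### staircase words: for 0 ≤ t ≤ α·β there is a word in a,b of the exact shape -/

lemma stair : ∀ (N α β : ℕ) (t : ℤ), α + β ≤ N → 0 ≤ t → t ≤ (α : ℤ) * β →
    ∃ l : List Heis, (∀ s ∈ l, s = a ∨ s = b) ∧ l.length = α + β ∧
      l.prod = ⟨(α : ℤ), (β : ℤ), t⟩ := by
  intro N
  induction N with
  | zero =>
    intro α β t hN h0 ht
    have hα : α = 0 := by omega
    have hβ : β = 0 := by omega
    subst hα; subst hβ
    have : t = 0 := by simpa using le_antisymm (by simpa using ht) h0
    exact ⟨[], by simp, by simp, by simp [one_def, this]⟩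
  | succ n ih =>
    intro α β t hN h0 ht
    rcases Nat.eq_zero_or_pos α with hα | hα
    · subst hα
      have ht0 : t = 0 := le_antisymm (by simpa using ht) h0
      refine ⟨List.replicate β b, ?_, by simp, ?_⟩
      · intro s hs; right; exact (List.eq_of_mem_replicate hs)
      · rw [prod_replicate_b, ht0]; norm_num
    rcases le_or_gt (β : ℤ) t with hbt | hbt
    · -- first letter a
      obtain ⟨l, hl1, hl2, hl3⟩ := ih (α - 1) β (t - β) (by omega) (by linarith)
        (by push_cast [Nat.cast_sub hα]; push_cast; nlinarith [ht])
      refine ⟨a :: l, ?_, by simp [hl2]; omega, ?_⟩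
      · intro s hs; rcases List.mem_cons.mp hs with rfl | hs'
        · exact Or.inl rfl
        · exact hl1 s hs'
      · rw [List.prod_cons, hl3, mul_def]
        simp only [a, mk.injEq]
        push_cast [Nat.cast_sub hα]
        refine ⟨by ring, by ring, by ring⟩
    · -- first letter b ; here t < β so β ≥ 1
      have hβ : 1 ≤ β := by by_contra hc; push_neg at hc; interval_cases β <;> omega
      obtain ⟨l, hl1, hl2, hl3⟩ := ih α (β - 1) t (by omega) h0
        (by
          push_cast [Nat.cast_sub hβ]
          have : t ≤ (β : ℤ) - 1 := by omega
          nlinarith [this, Int.natCast_nonneg α, hα])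
      refine ⟨b :: l, ?_, by simp [hl2]; omega, ?_⟩
      · intro s hs; rcases List.mem_cons.mp hs with rfl | hs'
        · exact Or.inr rfl
        · exact hl1 s hs'
      · rw [List.prod_cons, hl3, mul_def]
        simp only [b, mk.injEq]
        push_cast [Nat.cast_sub hβ]
        refine ⟨by ring, by ring, by ring⟩

/-- staircase, packaged -/
lemma stair' (α β : ℕ) (t : ℤ) (h0 : 0 ≤ t) (ht : t ≤ (α : ℤ) * β) :
    ∃ l : List Heis, (∀ s ∈ l, s = a ∨ s = b) ∧ l.length = α + β ∧
      l.prod = ⟨(α : ℤ), (β : ℤ), t⟩ :=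
  stair (α + β) α β t le_rfl h0 ht

/-! ### homomorphisms of Heis used for symmetry transfer -/

lemma prod_map_of_hom (f : Heis → Heis) (h1 : f 1 = 1)
    (hm : ∀ p q, f (p * q) = f p * f q) (l : List Heis) :
    (l.map f).prod = f l.prod := by
  induction l with
  | nil => simp [h1]
  | cons e t ih => simp [List.prod_cons, hm, ih]

def phiX : Heis → Heis := fun p => ⟨-p.x, p.y, -p.z⟩
def phiY : Heis → Heis := fun p => ⟨p.x, -p.y, -p.z⟩
def psi : Heis → Heis := fun p => ⟨-p.x, -p.y, p.z⟩
def sig : Heis → Heis := fun p => ⟨p.y, p.x, p.x * p.y - p.z⟩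

lemma phiX_mul (p q : Heis) : phiX (p * q) = phiX p * phiX q := by
  simp only [phiX, mul_def, mk.injEq]; refine ⟨by ring, trivial, by ring⟩
lemma phiY_mul (p q : Heis) : phiY (p * q) = phiY p * phiY q := by
  simp only [phiY, mul_def, mk.injEq]; refine ⟨trivial, by ring, by ring⟩
lemma psi_mul (p q : Heis) : psi (p * q) = psi p * psi q := by
  simp only [psi, mul_def, mk.injEq]; refine ⟨by ring, by ring, by ring⟩
lemma sig_mul (p q : Heis) : sig (p * q) = sig p * sig q := by
  simp only [sig, mul_def, mk.injEq]; refine ⟨trivial, trivial, by ring⟩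

lemma phiX_one : phiX 1 = 1 := by simp [phiX, one_def]
lemma phiY_one : phiY 1 = 1 := by simp [phiY, one_def]
lemma psi_one : psi 1 = 1 := by simp [psi, one_def]
lemma sig_one : sig 1 = 1 := by simp [sig, one_def]

lemma phiX_invol (p : Heis) : phiX (phiX p) = p := by simp [phiX]
lemma phiY_invol (p : Heis) : phiY (phiY p) = p := by simp [phiY]
lemma sig_invol (p : Heis) : sig (sig p) = p := by
  obtain ⟨x, y, z⟩ := p
  simp only [sig, mk.injEq]
  refine ⟨trivial, trivial, by ring⟩

lemma phiX_a : phiX a = ai := by simp [phiX, a, ai]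
lemma phiX_b : phiX b = b := by simp [phiX, b]
lemma phiX_ai : phiX ai = a := by simp [phiX, a, ai]
lemma phiX_bi : phiX bi = bi := by simp [phiX, bi]
lemma phiY_a : phiY a = a := by simp [phiY, a]
lemma phiY_b : phiY b = bi := by simp [phiY, b, bi]
lemma phiY_ai : phiY ai = ai := by simp [phiY, ai]
lemma phiY_bi : phiY bi = b := by simp [phiY, b, bi]
lemma psi_a : psi a = ai := by simp [psi, a, ai]
lemma psi_b : psi b = bi := by simp [psi, b, bi]
lemma sig_a : sig a = b := by simp [sig, a, b]
lemma sig_b : sig b = a := by simp [sig, a, b]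
lemma sig_ai : sig ai = bi := by simp [sig, ai, bi]
lemma sig_bi : sig bi = ai := by simp [sig, ai, bi]

lemma phiX_S {s : Heis} (h : s ∈ S) : phiX s ∈ S := by
  rcases mem_S_iff.mp h with rfl | rfl | rfl | rfl <;>
    simp [phiX_a, phiX_b, phiX_ai, phiX_bi, a_mem_S, b_mem_S, ai_mem_S, bi_mem_S]
lemma phiY_S {s : Heis} (h : s ∈ S) : phiY s ∈ S := by
  rcases mem_S_iff.mp h with rfl | rfl | rfl | rfl <;>
    simp [phiY_a, phiY_b, phiY_ai, phiY_bi, a_mem_S, b_mem_S, ai_mem_S, bi_mem_S]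
lemma sig_S {s : Heis} (h : s ∈ S) : sig s ∈ S := by
  rcases mem_S_iff.mp h with rfl | rfl | rfl | rfl <;>
    simp [sig_a, sig_b, sig_ai, sig_bi, a_mem_S, b_mem_S, ai_mem_S, bi_mem_S]

end Heis
namespace Heis

/-- maximal z achievable by a word with the given letter counts -/
def Fz (α α' β β' : ℕ) : ℤ :=
  max ((α : ℤ) * β + max ((α' : ℤ) - α) 0 * β') ((α' : ℤ) * β' + max ((α : ℤ) - α') 0 * β)

lemma S_of_ab {l : List Heis} (h : ∀ s ∈ l, s = a ∨ s = b) : ∀ s ∈ l, s ∈ S := by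
  intro s hs; rcases h s hs with rfl | rfl; exacts [a_mem_S, b_mem_S]

lemma psi_map_S {l : List Heis} (h : ∀ s ∈ l, s = a ∨ s = b) :
    ∀ s ∈ l.map psi, s ∈ S := by
  intro s hs
  obtain ⟨u, hu, rfl⟩ := List.mem_map.mp hs
  rcases h u hu with rfl | rfl
  · rw [psi_a]; exact ai_mem_S
  · rw [psi_b]; exact bi_mem_S

/-- a word with counts (α', β') in letters a⁻¹, b⁻¹ and z-value s, for 0 ≤ s ≤ α'β' -/
lemma stairDown (α' β' : ℕ) (s : ℤ) (h0 : 0 ≤ s) (hs : s ≤ (α' : ℤ) * β') :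
    ∃ l : List Heis, (∀ x ∈ l, x ∈ S) ∧ l.length = α' + β' ∧
      l.prod = ⟨-(α' : ℤ), -(β' : ℤ), s⟩ := by
  obtain ⟨l, hl1, hl2, hl3⟩ := stair' α' β' s h0 hs
  refine ⟨l.map psi, psi_map_S hl1, by simp [hl2], ?_⟩
  rw [prod_map_of_hom psi psi_one psi_mul, hl3]
  simp [psi]

/-- Main achievability: any z between the extremes is the z-value of a word with
    exactly the given letter counts. -/
lemma achievePos (α α' β β' : ℕ) (z : ℤ) (h0 : 0 ≤ z) (h2 : z ≤ Fz α α' β β') :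
    ∃ l : List Heis, (∀ s ∈ l, s ∈ S) ∧ l.length = α + α' + β + β' ∧
      l.prod = ⟨(α : ℤ) - α', (β : ℤ) - β', z⟩ := by
  have hab : (0:ℤ) ≤ (α : ℤ) * β := mul_nonneg (Int.natCast_nonneg _) (Int.natCast_nonneg _)
  have hab' : (0:ℤ) ≤ (α : ℤ) * β' := mul_nonneg (Int.natCast_nonneg _) (Int.natCast_nonneg _)
  have ha'b : (0:ℤ) ≤ (α' : ℤ) * β := mul_nonneg (Int.natCast_nonneg _) (Int.natCast_nonneg _)
  have ha'b' : (0:ℤ) ≤ (α' : ℤ) * β' := mul_nonneg (Int.natCast_nonneg _) (Int.natCast_nonneg _)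
  rcases le_or_gt z ((α:ℤ)*β + ((α':ℤ) - α)*β') with hB | hB
  · -- shape B : stair(α,β,t) ++ stairDown(α',β',s), z = t + s − αβ'
    set t : ℤ := min (z + (α:ℤ)*β') ((α:ℤ)*β) with htdef
    set s : ℤ := z + (α:ℤ)*β' - t with hsdef
    have ht0 : 0 ≤ t := le_min (by linarith) hab
    have ht1 : t ≤ (α:ℤ)*β := min_le_right _ _
    have hs0 : 0 ≤ s := by
      rcases min_le_iff.mp (le_refl t) with h | h <;> simp only [hsdef, htdef] <;> omega
    have hs1 : s ≤ (α':ℤ)*β' := by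
      rcases le_total (z + (α:ℤ)*β') ((α:ℤ)*β) with h | h
      · have : t = z + (α:ℤ)*β' := min_eq_left h
        simp only [hsdef, this]; linarith
      · have : t = (α:ℤ)*β := min_eq_right h
        simp only [hsdef, this]; nlinarith [hB]
    obtain ⟨l1, hl11, hl12, hl13⟩ := stair' α β t ht0 ht1
    obtain ⟨l2, hl21, hl22, hl23⟩ := stairDown α' β' s hs0 hs1
    refine ⟨l1 ++ l2, ?_, by simp [hl12, hl22]; omega, ?_⟩
    · intro x hx; rcases List.mem_append.mp hx with h | h
      exacts [S_of_ab hl11 x h, hl21 x h]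
    · rw [List.prod_append, hl13, hl23, mul_def]
      simp only [mk.injEq]
      refine ⟨by ring, by ring, by simp only [hsdef]; ring⟩
  rcases le_or_gt z ((α':ℤ)*β' + ((α:ℤ) - α')*β) with hC | hC
  · -- shape C : stairDown(α',β',s) ++ stair(α,β,t), z = s + t − α'β
    set s : ℤ := min (z + (α':ℤ)*β) ((α':ℤ)*β') with hsdef
    set t : ℤ := z + (α':ℤ)*β - s with htdef
    have hs0 : 0 ≤ s := le_min (by linarith) ha'b'
    have hs1 : s ≤ (α':ℤ)*β' := min_le_right _ _
    have ht0 : 0 ≤ t := by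
      rcases min_le_iff.mp (le_refl s) with h | h <;> simp only [htdef, hsdef] <;> omega
    have ht1 : t ≤ (α:ℤ)*β := by
      rcases le_total (z + (α':ℤ)*β) ((α':ℤ)*β') with h | h
      · have : s = z + (α':ℤ)*β := min_eq_left h
        simp only [htdef, this]; linarith
      · have : s = (α':ℤ)*β' := min_eq_right h
        simp only [htdef, this]; nlinarith [hC]
    obtain ⟨l1, hl11, hl12, hl13⟩ := stair' α β t ht0 ht1
    obtain ⟨l2, hl21, hl22, hl23⟩ := stairDown α' β' s hs0 hs1
    refine ⟨l2 ++ l1, ?_, by simp [hl12, hl22]; omega, ?_⟩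
    · intro x hx; rcases List.mem_append.mp hx with h | h
      exacts [hl21 x h, S_of_ab hl11 x h]
    · rw [List.prod_append, hl23, hl13, mul_def]
      simp only [mk.injEq]
      refine ⟨by ring, by ring, by simp only [htdef]; ring⟩
  -- remaining: z > both signed bounds
  have h2' : z ≤ (α : ℤ) * β ∨ z ≤ (α' : ℤ) * β' := by
    unfold Fz at h2
    rcases le_max_iff.mp h2 with h | h
    · rcases le_or_gt ((α':ℤ) - α) 0 with hle | hgt
      · left; rw [max_eq_right hle] at h; linarith
      · exfalso; rw [max_eq_left hgt.le] at h; linarith [hB]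
    · rcases le_or_gt ((α:ℤ) - α') 0 with hle | hgt
      · right; rw [max_eq_right hle] at h; linarith
      · exfalso; rw [max_eq_left hgt.le] at h; linarith [hC]
  rcases h2' with hA | hE
  · -- shape A : bi^β' ++ stair(α,β,z) ++ ai^α'
    obtain ⟨l1, hl11, hl12, hl13⟩ := stair' α β z h0 hA
    refine ⟨List.replicate β' bi ++ (l1 ++ List.replicate α' ai), ?_, ?_, ?_⟩
    · intro x hx
      rcases List.mem_append.mp hx with h | h
      · rw [List.eq_of_mem_replicate h]; exact bi_mem_S
      rcases List.mem_append.mp h with h | h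
      · exact S_of_ab hl11 x h
      · rw [List.eq_of_mem_replicate h]; exact ai_mem_S
    · simp [hl12]; omega
    · rw [List.prod_append, List.prod_append, hl13, prod_replicate_bi, prod_replicate_ai,
        mul_def, mul_def]
      simp only [mk.injEq]
      refine ⟨by ring, by ring, by ring⟩
  · -- shape E : b^β ++ stairDown(α',β',z) ++ a^α
    obtain ⟨l2, hl21, hl22, hl23⟩ := stairDown α' β' z h0 hE
    refine ⟨List.replicate β b ++ (l2 ++ List.replicate α a), ?_, ?_, ?_⟩
    · intro x hx
      rcases List.mem_append.mp hx with h | h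
      · rw [List.eq_of_mem_replicate h]; exact b_mem_S
      rcases List.mem_append.mp h with h | h
      · exact hl21 x h
      · rw [List.eq_of_mem_replicate h]; exact a_mem_S
    · simp [hl22]; omega
    · rw [List.prod_append, List.prod_append, hl23, prod_replicate_b, prod_replicate_a,
        mul_def, mul_def]
      simp only [mk.injEq]
      refine ⟨by ring, by ring, by ring⟩

/-- full achievability, both signs -/
lemma achieve (α α' β β' : ℕ) (z : ℤ) (h1 : -Fz α' α β β' ≤ z) (h2 : z ≤ Fz α α' β β') :
    ∃ l : List Heis, (∀ s ∈ l, s ∈ S) ∧ l.length = α + α' + β + β' ∧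
      l.prod = ⟨(α : ℤ) - α', (β : ℤ) - β', z⟩ := by
  rcases le_or_gt 0 z with h0 | h0
  · exact achievePos α α' β β' z h0 h2
  · obtain ⟨l, hl1, hl2, hl3⟩ := achievePos α' α β β' (-z) (by linarith) (by linarith)
    refine ⟨l.map phiX, ?_, by simp [hl2]; omega, ?_⟩
    · intro x hx
      obtain ⟨u, hu, rfl⟩ := List.mem_map.mp hx
      exact phiX_S (hl1 u hu)
    · rw [prod_map_of_hom phiX phiX_one phiX_mul, hl3]
      simp only [phiX, mk.injEq]
      refine ⟨by ring, trivial, by ring⟩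

end Heis
namespace Heis

/-! ### wdist utilities -/

lemma word_wdist_le (g : Heis) (l : List Heis) (hl : ∀ s ∈ l, s ∈ S) (hp : l.prod = g) :
    wdist 1 g ≤ l.length :=
  Nat.sInf_le ⟨l, hl, rfl, by rw [one_mul, hp]⟩

/-! ### segments of the infinite word -/

def seg (w : ℕ → Heis) (s L : ℕ) : List Heis := (List.range L).map (fun i => w (s + i))

lemma pref_eq_seg (w : ℕ → Heis) (n : ℕ) : (List.range n).map w = seg w 0 n := by
  simp [seg]

lemma seg_add (w : ℕ → Heis) (s L1 L2 : ℕ) :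
    seg w s (L1 + L2) = seg w s L1 ++ seg w (s + L1) L2 := by
  unfold seg
  rw [List.range_add, List.map_append, List.map_map]
  congr 1
  apply List.map_congr_left
  intro i _
  simp only [Function.comp_apply]
  congr 1
  omega

lemma seg_one (w : ℕ → Heis) (s : ℕ) : seg w s 1 = [w s] := by
  simp [seg, List.range_succ]

lemma mem_seg {w : ℕ → Heis} {s L : ℕ} {x : Heis} (h : x ∈ seg w s L) :
    ∃ i, i < L ∧ w (s + i) = x := by
  obtain ⟨i, hi, rfl⟩ := List.mem_map.mp h
  exact ⟨i, List.mem_range.mp hi, rfl⟩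

lemma seg_mem_self {w : ℕ → Heis} {s L i : ℕ} (h : i < L) : w (s + i) ∈ seg w s L :=
  List.mem_map.mpr ⟨i, List.mem_range.mpr h, rfl⟩

lemma seg_S {w : ℕ → Heis} (hw : ∀ t, w t ∈ S) (s L : ℕ) : ∀ x ∈ seg w s L, x ∈ S := by
  intro x hx; obtain ⟨i, _, rfl⟩ := mem_seg hx; exact hw _

lemma seg_length (w : ℕ → Heis) (s L : ℕ) : (seg w s L).length = L := by simp [seg]

/-! ### the window inequality -/

lemma winUB (μ ν p1 m1 p2 m2 : ℤ) (hμ : 1 ≤ μ) (hν : 1 ≤ ν)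
    (h1 : 0 ≤ p1) (h2 : 0 ≤ m1) (h3 : 0 ≤ p2) (h4 : 0 ≤ m2) :
    p1 + (μ-1)*m1 + (1+ν-μ)*p2 + (μ-1)*m2 ≤
      max (ν*(p1+p2) + max (μ-ν) 0 * (m1+m2)) (μ*(m1+m2) + max (ν-μ) 0 * (p1+p2)) := by
  rcases le_or_gt μ ν with hμν | hμν
  · -- ν ≥ μ
    rw [max_eq_right (by linarith : μ - ν ≤ 0), max_eq_left (by linarith : (0:ℤ) ≤ ν - μ)]
    rcases le_or_gt (m1 + m2) p2 with hc | hc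
    · refine le_trans ?_ (le_max_left _ _)
      nlinarith [mul_nonneg (by linarith : (0:ℤ) ≤ ν - 1) h1,
        mul_nonneg (by linarith : (0:ℤ) ≤ μ - 1) (by linarith : (0:ℤ) ≤ p2 - (m1 + m2))]
    · rcases eq_or_lt_of_le hμν with heq | hlt
      · subst heq
        rcases le_or_gt (m1 + m2) (p1 + p2) with hd | hd
        · refine le_trans ?_ (le_max_left _ _)
          nlinarith [mul_nonneg (by linarith : (0:ℤ) ≤ μ - 1)
            (by linarith : (0:ℤ) ≤ p1 + p2 - (m1 + m2))]
        · refine le_trans ?_ (le_max_right _ _)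
          nlinarith []
      · refine le_trans ?_ (le_max_right _ _)
        nlinarith [mul_nonneg (by linarith : (0:ℤ) ≤ ν - μ - 1) h1]
  · -- ν < μ
    rw [max_eq_left (by linarith : (0:ℤ) ≤ μ - ν), max_eq_right (by linarith : ν - μ ≤ 0)]
    rcases le_or_gt p1 (m1 + m2) with hp | hp
    · refine le_trans ?_ (le_max_right _ _)
      nlinarith [mul_nonneg (by linarith : (0:ℤ) ≤ μ - ν - 1) h3]
    · refine le_trans ?_ (le_max_left _ _)
      nlinarith [mul_nonneg (by linarith : (0:ℤ) ≤ ν - 1) (by linarith : (0:ℤ) ≤ p1 - (m1 + m2)),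
        mul_nonneg (by linarith : (0:ℤ) ≤ μ - 1) h3]

end Heis
namespace Heis

/-- first occurrence after N, with minimality -/
lemma first_after (w : ℕ → Heis) (x : Heis) (hx : {t : ℕ | w t = x}.Infinite) (N : ℕ) :
    ∃ t, N < t ∧ w t = x ∧ ∀ u, N < u → u < t → w u ≠ x := by
  classical
  have hex : ∃ t, N < t ∧ w t = x := by
    obtain ⟨t, htw, htgt⟩ := hx.exists_gt N; exact ⟨t, htgt, htw⟩
  refine ⟨Nat.find hex, (Nat.find_spec hex).1, (Nat.find_spec hex).2, ?_⟩
  intro u h1 h2 hP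
  exact Nat.find_min hex h2 ⟨h1, hP⟩

/-- last occurrence at or before N (given one exists) -/
lemma last_before (w : ℕ → Heis) (x : Heis) (N m : ℕ) (hm : m ≤ N) (hx : w m = x) :
    ∃ t, t ≤ N ∧ w t = x ∧ ∀ u, t < u → u ≤ N → w u ≠ x := by
  classical
  have hspec : w (Nat.findGreatest (fun t => w t = x) N) = x :=
    Nat.findGreatest_spec (P := fun t => w t = x) hm hx
  refine ⟨Nat.findGreatest (fun t => w t = x) N, Nat.findGreatest_le N, hspec, ?_⟩
  intro u h1 h2
  exact Nat.findGreatest_is_greatest h1 h2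

set_option maxHeartbeats 1000000 in
lemma core1 (w : ℕ → Heis) (hw : ∀ t, w t ∈ S)
    (hgeo : ∀ n : ℕ, wdist 1 (((List.range n).map w).prod) = n)
    (ha : {t : ℕ | w t = a}.Infinite) (hai : {t : ℕ | w t = ai}.Infinite) : False := by
  classical
  obtain ⟨ta, hta⟩ := ha.nonempty
  obtain ⟨t2, ht2w, ht2gt⟩ := hai.exists_gt ta
  obtain ⟨t1, ht1le, ht1P, hno_a_12⟩ := last_before w a t2 ta (le_of_lt ht2gt) hta
  have ht1lt : t1 < t2 := lt_of_le_of_ne ht1le (by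
    intro h; rw [h, ht2w] at ht1P; exact a_ne_ai ht1P.symm)
  obtain ⟨t3, ht3gt, ht3P, hno_a_23⟩ := first_after w a ha t2
  obtain ⟨t4, ht4gt, ht4P, hno_ai_34⟩ := first_after w ai hai t3
  -- window pieces
  set M1 := seg w (t1+1) (t3 - (t1+1)) with hM1def
  set M2 := seg w t3 (t4 - t3) with hM2def
  have hM1S : ∀ x ∈ M1, x ∈ S := seg_S hw _ _
  have hM2S : ∀ x ∈ M2, x ∈ S := seg_S hw _ _
  have hM1na : a ∉ M1 := by
    intro hmem
    obtain ⟨i, hi, hwi⟩ := mem_seg hmem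
    rcases le_or_gt (t1 + 1 + i) t2 with h | h
    · exact hno_a_12 _ (by omega) h hwi
    · exact hno_a_23 _ h (by omega) hwi
  have hM2nai : ai ∉ M2 := by
    intro hmem
    obtain ⟨i, hi, hwi⟩ := mem_seg hmem
    rcases Nat.eq_zero_or_pos i with rfl | hpos
    · rw [Nat.add_zero, ht3P] at hwi; exact a_ne_ai hwi
    · exact hno_ai_34 _ (by omega) (by omega) hwi
  have hM1a0 : M1.count a = 0 := List.count_eq_zero.mpr hM1na
  have hM2ai0 : M2.count ai = 0 := List.count_eq_zero.mpr hM2nai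
  -- counts
  set MU := M1.count ai with hMUdef
  set NU := M2.count a with hNUdef
  set p1 := M1.count b with hp1def
  set m1 := M1.count bi with hm1def
  set p2 := M2.count b with hp2def
  set m2 := M2.count bi with hm2def
  have hMU1 : 1 ≤ MU := by
    have : ai ∈ M1 := by
      have : w (t1 + 1 + (t2 - (t1+1))) = ai := by
        rw [show t1 + 1 + (t2 - (t1+1)) = t2 from by omega]; exact ht2w
      have hlt : t2 - (t1+1) < t3 - (t1+1) := by omega
      rw [← this]; exact seg_mem_self hlt
    exact List.count_pos_iff.mpr this
  have hNU1 : 1 ≤ NU := by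
    have : a ∈ M2 := by
      have h0 : w (t3 + 0) = a := by rw [Nat.add_zero]; exact ht3P
      rw [← h0]; exact seg_mem_self (by omega)
    exact List.count_pos_iff.mpr this
  -- coordinates of pieces
  have hxM1 : M1.prod.x = -(MU : ℤ) := by
    rw [coords_x M1 hM1S, hM1a0]; simp [hMUdef]
  have hyM1 : M1.prod.y = (p1 : ℤ) - m1 := coords_y M1 hM1S
  have hxM2 : M2.prod.x = (NU : ℤ) := by
    rw [coords_x M2 hM2S, hM2ai0]; simp [hNUdef]
  have hyM2 : M2.prod.y = (p2 : ℤ) - m2 := coords_y M2 hM2S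
  have hzM1ub : M1.prod.z ≤ (MU : ℤ) * m1 := desc_z_ub M1 hM1S hM1na
  have hzM1lb : -((MU : ℤ) * p1) ≤ M1.prod.z := desc_z_lb M1 hM1S hM1na
  have hzM2ub : M2.prod.z ≤ (NU : ℤ) * p2 := asc_z_ub M2 hM2S hM2nai
  have hzM2lb : -((NU : ℤ) * m2) ≤ M2.prod.z := asc_z_lb M2 hM2S hM2nai
  -- the window
  set W := seg w t1 (t4 + 1 - t1) with hWdef
  have hWsplit : W = [a] ++ (M1 ++ (M2 ++ [ai])) := by
    rw [hWdef, show t4 + 1 - t1 = 1 + ((t3 - (t1+1)) + ((t4 - t3) + 1)) from by omega,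
      seg_add, seg_add, seg_add, seg_one, seg_one]
    rw [show t1 + 1 + (t3 - (t1+1)) = t3 from by omega, show t3 + (t4 - t3) = t4 from by omega,
      ht1P, ht4P]
  -- z and coordinates of the window
  have hprodW : W.prod = ⟨(NU : ℤ) - MU, ((p1:ℤ)+p2) - ((m1:ℤ)+m2),
      M1.prod.z + M2.prod.z + (-(MU:ℤ)) * ((p2:ℤ) - m2) + ((p1:ℤ) - m1) + ((p2:ℤ) - m2)⟩ := by
    rw [hWsplit]
    apply Heis.ext
    · rw [prod_append_x, prod_append_x, prod_append_x]
      have hxa : ([a] : List Heis).prod.x = 1 := by simp [a]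
      have hxai : ([ai] : List Heis).prod.x = -1 := by simp [ai]
      rw [hxa, hxai, hxM1, hxM2]; ring
    · rw [prod_append_y, prod_append_y, prod_append_y]
      have hya : ([a] : List Heis).prod.y = 0 := by simp [a]
      have hyai : ([ai] : List Heis).prod.y = 0 := by simp [ai]
      rw [hya, hyai, hyM1, hyM2]; ring
    · have h1 : ([a] : List Heis).prod.z = 0 := by simp [a]
      have h2 : ([a] : List Heis).prod.x = 1 := by simp [a]
      have h3 : ([ai] : List Heis).prod.z = 0 := by simp [ai]
      have h4 : ([ai] : List Heis).prod.y = 0 := by simp [ai]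
      simp only [prod_append_z, prod_append_y, h1, h2, h3, h4, hxM1, hyM1, hxM2, hyM2]
      ring
  obtain ⟨zW, hzWdef⟩ : ∃ zz : ℤ, zz = M1.prod.z + M2.prod.z + (-(MU:ℤ)) * ((p2:ℤ) - m2)
      + ((p1:ℤ) - m1) + ((p2:ℤ) - m2) := ⟨_, rfl⟩
  rw [← hzWdef] at hprodW
  -- bounds on zW
  have hMU1' : (1 : ℤ) ≤ (MU : ℤ) := by exact_mod_cast hMU1
  have hNU1' : (1 : ℤ) ≤ (NU : ℤ) := by exact_mod_cast hNU1
  have hub : zW ≤ Fz NU MU (p1 + p2) (m1 + m2) := by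
    have hW := winUB (MU : ℤ) (NU : ℤ) (p1 : ℤ) (m1 : ℤ) (p2 : ℤ) (m2 : ℤ) hMU1' hNU1'
      (Int.natCast_nonneg _) (Int.natCast_nonneg _) (Int.natCast_nonneg _) (Int.natCast_nonneg _)
    have hstep : zW ≤ (p1:ℤ) + ((MU:ℤ)-1)*m1 + (1+(NU:ℤ)-MU)*p2 + ((MU:ℤ)-1)*m2 := by
      rw [hzWdef]; nlinarith [hzM1ub, hzM2ub]
    have hFz : Fz NU MU (p1+p2) (m1+m2) =
        max ((NU:ℤ)*((p1:ℤ)+p2) + max ((MU:ℤ)-NU) 0 * ((m1:ℤ)+m2))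
          ((MU:ℤ)*((m1:ℤ)+m2) + max ((NU:ℤ)-MU) 0 * ((p1:ℤ)+p2)) := by
      unfold Fz; push_cast; ring_nf
    rw [hFz]
    exact le_trans hstep hW
  have hlb : -Fz MU NU (p1 + p2) (m1 + m2) ≤ zW := by
    have hW := winUB (MU : ℤ) (NU : ℤ) (m1 : ℤ) (p1 : ℤ) (m2 : ℤ) (p2 : ℤ) hMU1' hNU1'
      (Int.natCast_nonneg _) (Int.natCast_nonneg _) (Int.natCast_nonneg _) (Int.natCast_nonneg _)
    have hneg : -zW ≤ (m1:ℤ) + ((MU:ℤ)-1)*p1 + (1+(NU:ℤ)-MU)*m2 + ((MU:ℤ)-1)*p2 := by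
      rw [hzWdef]; nlinarith [hzM1lb, hzM2lb]
    have hFz : Fz MU NU (p1+p2) (m1+m2) =
        max ((NU:ℤ)*((m1:ℤ)+m2) + max ((MU:ℤ)-NU) 0 * ((p1:ℤ)+p2))
          ((MU:ℤ)*((p1:ℤ)+p2) + max ((NU:ℤ)-MU) 0 * ((m1:ℤ)+m2)) := by
      unfold Fz; rw [max_comm]; push_cast; ring_nf
    have : -zW ≤ Fz MU NU (p1 + p2) (m1 + m2) := by rw [hFz]; exact le_trans hneg hW
    linarith
  -- build the shorter word
  obtain ⟨l', hl'S, hl'len, hl'prod⟩ := achieve NU MU (p1 + p2) (m1 + m2) zW hlb hub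
  have hl'prodW : l'.prod = W.prod := by
    rw [hl'prod, hprodW]
    refine Heis.ext rfl ?_ rfl
    show ((p1 + p2 : ℕ) : ℤ) - ((m1 + m2 : ℕ) : ℤ) = ((p1:ℤ)+p2) - ((m1:ℤ)+m2)
    push_cast; ring
  -- lengths
  have hlenM1 : M1.length = MU + p1 + m1 := by
    rw [length_eq_counts M1 hM1S, hM1a0]; omega
  have hlenM2 : M2.length = NU + p2 + m2 := by
    rw [length_eq_counts M2 hM2S, hM2ai0]; omega
  have hlenM1' : M1.length = t3 - (t1+1) := seg_length _ _ _
  have hlenM2' : M2.length = t4 - t3 := seg_length _ _ _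
  -- splice
  have hsplit2 : seg w 0 (t4+1) = seg w 0 t1 ++ W := by
    rw [show t4 + 1 = t1 + (t4 + 1 - t1) from by omega, seg_add, Nat.zero_add]
  set l'' := seg w 0 t1 ++ l' with hl''def
  have hprodl'' : l''.prod = ((List.range (t4+1)).map w).prod := by
    rw [hl''def, List.prod_append, hl'prodW, pref_eq_seg, hsplit2, List.prod_append]
  have hS'' : ∀ x ∈ l'', x ∈ S := by
    intro x hx
    rcases List.mem_append.mp hx with h | h
    exacts [seg_S hw _ _ x h, hl'S x h]
  have hlen'' : l''.length = t1 + (NU + MU + (p1 + p2) + (m1 + m2)) := by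
    rw [hl''def, List.length_append, seg_length, hl'len]
  have hwle := word_wdist_le _ l'' hS'' hprodl''
  have hg := hgeo (t4+1)
  rw [hg] at hwle
  omega

end Heis
namespace Heis

lemma seg_all (w : ℕ → Heis) (x : Heis) (s L : ℕ) (h : ∀ i, i < L → w (s + i) = x) :
    seg w s L = List.replicate L x := by
  have hmem : ∀ y ∈ seg w s L, y = x := by
    intro y hy; obtain ⟨i, hi, rfl⟩ := mem_seg hy; exact h i hi
  have := List.eq_replicate_of_mem hmem
  rwa [seg_length] at this

lemma many_occ (w : ℕ → Heis) (x : Heis) (hx : {t : ℕ | w t = x}.Infinite) (N : ℕ) :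
    ∀ m : ℕ, ∃ T, N < T ∧ m ≤ (seg w (N+1) (T - N)).count x := by
  intro m
  induction m with
  | zero =>
    obtain ⟨T, _, hT⟩ := hx.exists_gt N
    exact ⟨T, hT, Nat.zero_le _⟩
  | succ m ih =>
    obtain ⟨T, hTN, hTc⟩ := ih
    obtain ⟨T', hT'w, hT'gt⟩ := hx.exists_gt T
    refine ⟨T', by omega, ?_⟩
    have hsplit : seg w (N+1) (T' - N) = seg w (N+1) (T - N) ++ seg w (T+1) (T' - T) := by
      rw [show T' - N = (T - N) + (T' - T) from by omega, seg_add,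
        show N + 1 + (T - N) = T + 1 from by omega]
    rw [hsplit, List.count_append]
    have hx' : x ∈ seg w (T+1) (T' - T) := by
      have : w (T + 1 + (T' - T - 1)) = x := by
        rw [show T + 1 + (T' - T - 1) = T' from by omega]; exact hT'w
      rw [← this]; exact seg_mem_self (by omega)
    have := List.count_pos_iff.mpr hx'
    omega

lemma Fz_simple (A B : ℕ) : Fz A 0 B 0 = (A:ℤ) * B := by
  have h1 : max ((0:ℤ) - A) 0 = 0 := max_eq_right (by linarith [Int.natCast_nonneg A])
  have h2 : max ((A:ℤ) - 0) 0 = (A:ℤ) := by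
    rw [sub_zero]; exact max_eq_left (Int.natCast_nonneg A)
  unfold Fz
  push_cast
  rw [h1, h2]
  simp

lemma Fz_simple' (A B : ℕ) : Fz 0 A B 0 = 0 := by
  have h1 : max ((A:ℤ) - 0) 0 = (A:ℤ) := by
    rw [sub_zero]; exact max_eq_left (Int.natCast_nonneg A)
  have h2 : max ((0:ℤ) - A) 0 = 0 := max_eq_right (by linarith [Int.natCast_nonneg A])
  unfold Fz
  push_cast
  rw [h1, h2]
  simp

set_option maxHeartbeats 1000000 in
lemma core2 (w : ℕ → Heis) (hw : ∀ t, w t ∈ S)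
    (hgeo : ∀ n : ℕ, wdist 1 (((List.range n).map w).prod) = n)
    (ha : {t : ℕ | w t = a}.Infinite) (hb : {t : ℕ | w t = b}.Infinite)
    (hfai : ¬ {t : ℕ | w t = ai}.Infinite) (hfbi : ¬ {t : ℕ | w t = bi}.Infinite)
    (hex : ∃ t, w t = ai ∨ w t = bi) : False := by
  classical
  -- t0 : the last "inverse" letter
  set Sbad : Set ℕ := {t | w t = ai ∨ w t = bi} with hSbad
  have hfin : Sbad.Finite := by
    have : Sbad = {t | w t = ai} ∪ {t | w t = bi} := rfl
    rw [this]
    exact (Set.not_infinite.mp hfai).union (Set.not_infinite.mp hfbi)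
  obtain ⟨t0, ht0mem, ht0max⟩ := Set.Finite.exists_maximalFor id Sbad hfin hex
  have hafter : ∀ t, t0 < t → w t = a ∨ w t = b := by
    intro t ht
    rcases mem_S_iff.mp (hw t) with h | h | h | h
    · exact Or.inl h
    · exact Or.inr h
    · exfalso
      have : t ∈ Sbad := Or.inl h
      have := ht0max this (le_of_lt ht)
      simp only [id_eq] at this
      omega
    · exfalso
      have : t ∈ Sbad := Or.inr h
      have := ht0max this (le_of_lt ht)
      simp only [id_eq] at this
      omega
  rcases ht0mem with hai0 | hbi0
  · -- Case IIa : last inverse letter is a⁻¹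
    obtain ⟨t1, h10, ht1P, hno1⟩ := first_after w a ha t0
    obtain ⟨t2, h21, ht2P, hno2⟩ := first_after w a ha t1
    have hallb1 : ∀ i, i < t1 - (t0+1) → w (t0 + 1 + i) = b := by
      intro i hi
      rcases hafter (t0+1+i) (by omega) with h | h
      · exact absurd h (hno1 _ (by omega) (by omega))
      · exact h
    have hallb2 : ∀ i, i < t2 - (t1+1) → w (t1 + 1 + i) = b := by
      intro i hi
      rcases hafter (t1+1+i) (by omega) with h | h
      · exact absurd h (hno2 _ (by omega) (by omega))
      · exact h
    set j := t1 - (t0+1) with hjdef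
    set k := t2 - (t1+1) with hkdef
    -- choose T with enough b's after t2
    obtain ⟨T, hTgt, hTc⟩ := many_occ w b hb t2 j
    set V1 := seg w (t2+1) (T - t2) with hV1def
    set V0 := seg w (t0+1) (t2 - t0) with hV0def
    have hseg1 : seg w (t0+1) j = List.replicate j b :=
      seg_all w b (t0+1) j (fun i hi => hallb1 i (by omega))
    have hseg2 : seg w (t1+1) k = List.replicate k b :=
      seg_all w b (t1+1) k (fun i hi => hallb2 i (by omega))
    have hV0split : V0 = List.replicate j b ++ ([a] ++ (List.replicate k b ++ [a])) := by
      rw [hV0def, show t2 - t0 = j + (1 + (k + 1)) from by omega, seg_add, seg_add, seg_add,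
        seg_one, seg_one, show t0 + 1 + j = t1 from by omega,
        show t1 + 1 + k = t2 from by omega, ht1P, ht2P, hseg1, hseg2]
    have hV0prod : V0.prod = ⟨2, (j:ℤ) + k, (k:ℤ)⟩ := by
      rw [hV0split]
      rw [List.prod_append, List.prod_append, List.prod_append,
        prod_replicate_b, prod_replicate_b]
      have : ([a] : List Heis).prod = a := by simp
      rw [this]
      simp only [mul_def, a, mk.injEq]
      refine ⟨by ring, by ring, by ring⟩
    -- letters of V1
    have hV1S : ∀ x ∈ V1, x ∈ S := seg_S hw _ _
    have hV1nai : ai ∉ V1 := by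
      intro hmem
      obtain ⟨i, hi, hwi⟩ := mem_seg hmem
      rcases hafter (t2+1+i) (by omega) with h | h
      · rw [hwi] at h; exact a_ne_ai h.symm
      · rw [hwi] at h; exact b_ne_ai h.symm
    have hV1nbi : bi ∉ V1 := by
      intro hmem
      obtain ⟨i, hi, hwi⟩ := mem_seg hmem
      rcases hafter (t2+1+i) (by omega) with h | h
      · rw [hwi] at h; exact a_ne_bi h.symm
      · rw [hwi] at h; exact b_ne_bi h.symm
    have hV1ai0 : V1.count ai = 0 := List.count_eq_zero.mpr hV1nai
    have hV1bi0 : V1.count bi = 0 := List.count_eq_zero.mpr hV1nbi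
    set α1 := V1.count a with hα1def
    set β1 := V1.count b with hβ1def
    have hβ1j : j ≤ β1 := hTc
    have hxV1 : V1.prod.x = (α1 : ℤ) := by rw [coords_x V1 hV1S, hV1ai0]; simp [hα1def]
    have hyV1 : V1.prod.y = (β1 : ℤ) := by rw [coords_y V1 hV1S, hV1bi0]; simp [hβ1def]
    have hzV1ub : V1.prod.z ≤ (α1 : ℤ) * β1 := asc_z_ub V1 hV1S hV1nai
    have hzV1lb : (0:ℤ) ≤ V1.prod.z := by
      have := asc_z_lb V1 hV1S hV1nai
      rw [hV1bi0] at this; simpa using this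
    -- the window
    set W := seg w t0 (T + 1 - t0) with hWdef
    have hWsplit : W = [ai] ++ (V0 ++ V1) := by
      rw [hWdef, show T + 1 - t0 = 1 + ((t2 - t0) + (T - t2)) from by omega, seg_add, seg_add,
        seg_one, hai0, show t0 + 1 + (t2 - t0) = t2 + 1 from by omega]
    have hprodW : W.prod = ⟨(1:ℤ) + α1, ((j:ℤ) + k + β1),
        (k:ℤ) + V1.prod.z + 2 * β1 - ((j:ℤ) + k + β1)⟩ := by
      rw [hWsplit]
      apply Heis.ext
      · simp only [prod_append_x, hV0prod, hxV1]
        have : ([ai] : List Heis).prod.x = -1 := by simp [ai]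
        rw [this]; push_cast; try ring
      · simp only [prod_append_y, hV0prod, hyV1]
        have : ([ai] : List Heis).prod.y = 0 := by simp [ai]
        rw [this]; norm_num
      · have h1 : ([ai] : List Heis).prod.z = 0 := by simp [ai]
        have h2 : ([ai] : List Heis).prod.x = -1 := by simp [ai]
        simp only [prod_append_z, prod_append_y, h1, h2, hV0prod, hyV1]
        push_cast; try ring
    -- kill
    set zW : ℤ := (k:ℤ) + V1.prod.z + 2 * β1 - ((j:ℤ) + k + β1) with hzWdef
    have hzW0 : 0 ≤ zW := by
      rw [hzWdef]
      have : (j:ℤ) ≤ β1 := by exact_mod_cast hβ1j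
      linarith [hzV1lb]
    have hzWub : zW ≤ ((1:ℤ) + α1) * ((j:ℤ) + k + β1) := by
      rw [hzWdef]
      have hj0 : (0:ℤ) ≤ (j:ℤ) := Int.natCast_nonneg _
      have hk0 : (0:ℤ) ≤ (k:ℤ) := Int.natCast_nonneg _
      have hb10 : (0:ℤ) ≤ (β1:ℤ) := Int.natCast_nonneg _
      have ha10 : (0:ℤ) ≤ (α1:ℤ) := Int.natCast_nonneg _
      nlinarith [hzV1ub]
    have hFzub : zW ≤ Fz (1 + α1) 0 (j + k + β1) 0 := by
      rw [Fz_simple]; push_cast; push_cast at hzWub; linarith [hzWub]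
    have hFzlb : -Fz 0 (1 + α1) (j + k + β1) 0 ≤ zW := by
      rw [Fz_simple']; simpa using hzW0
    obtain ⟨l', hl'S, hl'len, hl'prod⟩ := achieve (1 + α1) 0 (j + k + β1) 0 zW hFzlb hFzub
    have hl'prodW : l'.prod = W.prod := by
      rw [hl'prod, hprodW]
      refine Heis.ext ?_ ?_ rfl
      · show ((1 + α1 : ℕ) : ℤ) - (0:ℕ) = (1:ℤ) + α1
        push_cast; ring
      · show ((j + k + β1 : ℕ) : ℤ) - (0:ℕ) = (j:ℤ) + k + β1
        push_cast; ring
    -- lengths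
    have hlenV1 : V1.length = α1 + β1 := by
      rw [length_eq_counts V1 hV1S, hV1ai0, hV1bi0]; omega
    have hlenV1' : V1.length = T - t2 := seg_length _ _ _
    have hsplit2 : seg w 0 (T+1) = seg w 0 t0 ++ W := by
      rw [show T + 1 = t0 + (T + 1 - t0) from by omega, seg_add, Nat.zero_add]
    set l'' := seg w 0 t0 ++ l' with hl''def
    have hprodl'' : l''.prod = ((List.range (T+1)).map w).prod := by
      rw [hl''def, List.prod_append, hl'prodW, pref_eq_seg, hsplit2, List.prod_append]
    have hS'' : ∀ x ∈ l'', x ∈ S := by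
      intro x hx
      rcases List.mem_append.mp hx with h | h
      exacts [seg_S hw _ _ x h, hl'S x h]
    have hlen'' : l''.length = t0 + ((1 + α1) + 0 + (j + k + β1) + 0) := by
      rw [hl''def, List.length_append, seg_length, hl'len]
    have hwle := word_wdist_le _ l'' hS'' hprodl''
    have hg := hgeo (T+1)
    rw [hg] at hwle
    omega
  · -- Case IIb : last inverse letter is b⁻¹
    obtain ⟨t1, h10, ht1P, hno1⟩ := first_after w b hb t0
    obtain ⟨t2, h21, ht2P, hno2⟩ := first_after w b hb t1
    have halla1 : ∀ i, i < t1 - (t0+1) → w (t0 + 1 + i) = a := by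
      intro i hi
      rcases hafter (t0+1+i) (by omega) with h | h
      · exact h
      · exact absurd h (hno1 _ (by omega) (by omega))
    have halla2 : ∀ i, i < t2 - (t1+1) → w (t1 + 1 + i) = a := by
      intro i hi
      rcases hafter (t1+1+i) (by omega) with h | h
      · exact h
      · exact absurd h (hno2 _ (by omega) (by omega))
    set q := t1 - (t0+1) with hqdef
    set q2 := t2 - (t1+1) with hq2def
    obtain ⟨T, hTgt, hTc⟩ := many_occ w a ha t2 q
    set V1 := seg w (t2+1) (T - t2) with hV1def
    set V0 := seg w (t0+1) (t2 - t0) with hV0def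
    have hseg1 : seg w (t0+1) q = List.replicate q a :=
      seg_all w a (t0+1) q (fun i hi => halla1 i (by omega))
    have hseg2 : seg w (t1+1) q2 = List.replicate q2 a :=
      seg_all w a (t1+1) q2 (fun i hi => halla2 i (by omega))
    have hV0split : V0 = List.replicate q a ++ ([b] ++ (List.replicate q2 a ++ [b])) := by
      rw [hV0def, show t2 - t0 = q + (1 + (q2 + 1)) from by omega, seg_add, seg_add, seg_add,
        seg_one, seg_one, show t0 + 1 + q = t1 from by omega,
        show t1 + 1 + q2 = t2 from by omega, ht1P, ht2P, hseg1, hseg2]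
    have hV0prod : V0.prod = ⟨(q:ℤ) + q2, 2, (q:ℤ) + ((q:ℤ) + q2)⟩ := by
      rw [hV0split]
      rw [List.prod_append, List.prod_append, List.prod_append,
        prod_replicate_a, prod_replicate_a]
      have : ([b] : List Heis).prod = b := by simp
      rw [this]
      simp only [mul_def, b, mk.injEq]
      refine ⟨by ring, by ring, by ring⟩
    have hV1S : ∀ x ∈ V1, x ∈ S := seg_S hw _ _
    have hV1nai : ai ∉ V1 := by
      intro hmem
      obtain ⟨i, hi, hwi⟩ := mem_seg hmem
      rcases hafter (t2+1+i) (by omega) with h | h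
      · rw [hwi] at h; exact a_ne_ai h.symm
      · rw [hwi] at h; exact b_ne_ai h.symm
    have hV1nbi : bi ∉ V1 := by
      intro hmem
      obtain ⟨i, hi, hwi⟩ := mem_seg hmem
      rcases hafter (t2+1+i) (by omega) with h | h
      · rw [hwi] at h; exact a_ne_bi h.symm
      · rw [hwi] at h; exact b_ne_bi h.symm
    have hV1ai0 : V1.count ai = 0 := List.count_eq_zero.mpr hV1nai
    have hV1bi0 : V1.count bi = 0 := List.count_eq_zero.mpr hV1nbi
    set α1 := V1.count a with hα1def
    set β1 := V1.count b with hβ1def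
    have hα1q : q ≤ α1 := hTc
    have hxV1 : V1.prod.x = (α1 : ℤ) := by rw [coords_x V1 hV1S, hV1ai0]; simp [hα1def]
    have hyV1 : V1.prod.y = (β1 : ℤ) := by rw [coords_y V1 hV1S, hV1bi0]; simp [hβ1def]
    have hzV1ub : V1.prod.z ≤ (α1 : ℤ) * β1 := asc_z_ub V1 hV1S hV1nai
    have hzV1lb : (0:ℤ) ≤ V1.prod.z := by
      have := asc_z_lb V1 hV1S hV1nai
      rw [hV1bi0] at this; simpa using this
    set W := seg w t0 (T + 1 - t0) with hWdef
    have hWsplit : W = [bi] ++ (V0 ++ V1) := by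
      rw [hWdef, show T + 1 - t0 = 1 + ((t2 - t0) + (T - t2)) from by omega, seg_add, seg_add,
        seg_one, hbi0, show t0 + 1 + (t2 - t0) = t2 + 1 from by omega]
    have hprodW : W.prod = ⟨(q:ℤ) + q2 + α1, (1:ℤ) + β1,
        ((q:ℤ) + ((q:ℤ) + q2)) + V1.prod.z + ((q:ℤ) + q2) * β1⟩ := by
      rw [hWsplit]
      apply Heis.ext
      · simp only [prod_append_x, hV0prod, hxV1]
        have : ([bi] : List Heis).prod.x = 0 := by simp [bi]
        rw [this]; push_cast; try ring
      · simp only [prod_append_y, hV0prod, hyV1]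
        have : ([bi] : List Heis).prod.y = -1 := by simp [bi]
        rw [this]; push_cast; try ring
      · have h1 : ([bi] : List Heis).prod.z = 0 := by simp [bi]
        have h2 : ([bi] : List Heis).prod.x = 0 := by simp [bi]
        simp only [prod_append_z, prod_append_y, h1, h2, hV0prod, hyV1]
        push_cast; try ring
    set zW : ℤ := ((q:ℤ) + ((q:ℤ) + q2)) + V1.prod.z + ((q:ℤ) + q2) * β1 with hzWdef
    have hq0 : (0:ℤ) ≤ (q:ℤ) := Int.natCast_nonneg _
    have hq20 : (0:ℤ) ≤ (q2:ℤ) := Int.natCast_nonneg _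
    have hb10 : (0:ℤ) ≤ (β1:ℤ) := Int.natCast_nonneg _
    have ha10 : (0:ℤ) ≤ (α1:ℤ) := Int.natCast_nonneg _
    have hzW0 : 0 ≤ zW := by
      rw [hzWdef]
      nlinarith [hzV1lb, mul_nonneg (by linarith : (0:ℤ) ≤ (q:ℤ)+q2) hb10]
    have hzWub : zW ≤ ((q:ℤ) + q2 + α1) * ((1:ℤ) + β1) := by
      rw [hzWdef]
      have hqα : (q:ℤ) ≤ (α1:ℤ) := by exact_mod_cast hα1q
      nlinarith [hzV1ub]
    have hFzub : zW ≤ Fz (q + q2 + α1) 0 (1 + β1) 0 := by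
      rw [Fz_simple]; push_cast; push_cast at hzWub; linarith [hzWub]
    have hFzlb : -Fz 0 (q + q2 + α1) (1 + β1) 0 ≤ zW := by
      rw [Fz_simple']; simpa using hzW0
    obtain ⟨l', hl'S, hl'len, hl'prod⟩ := achieve (q + q2 + α1) 0 (1 + β1) 0 zW hFzlb hFzub
    have hl'prodW : l'.prod = W.prod := by
      rw [hl'prod, hprodW]
      refine Heis.ext ?_ ?_ rfl
      · show ((q + q2 + α1 : ℕ) : ℤ) - (0:ℕ) = (q:ℤ) + q2 + α1
        push_cast; ring
      · show ((1 + β1 : ℕ) : ℤ) - (0:ℕ) = (1:ℤ) + β1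
        push_cast; ring
    have hlenV1 : V1.length = α1 + β1 := by
      rw [length_eq_counts V1 hV1S, hV1ai0, hV1bi0]; omega
    have hlenV1' : V1.length = T - t2 := seg_length _ _ _
    have hsplit2 : seg w 0 (T+1) = seg w 0 t0 ++ W := by
      rw [show T + 1 = t0 + (T + 1 - t0) from by omega, seg_add, Nat.zero_add]
    set l'' := seg w 0 t0 ++ l' with hl''def
    have hprodl'' : l''.prod = ((List.range (T+1)).map w).prod := by
      rw [hl''def, List.prod_append, hl'prodW, pref_eq_seg, hsplit2, List.prod_append]
    have hS'' : ∀ x ∈ l'', x ∈ S := by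
      intro x hx
      rcases List.mem_append.mp hx with h | h
      exacts [seg_S hw _ _ x h, hl'S x h]
    have hlen'' : l''.length = t0 + ((q + q2 + α1) + 0 + (1 + β1) + 0) := by
      rw [hl''def, List.length_append, seg_length, hl'len]
    have hwle := word_wdist_le _ l'' hS'' hprodl''
    have hg := hgeo (T+1)
    rw [hg] at hwle
    omega

end Heis
namespace Heis

lemma psi_ai : psi ai = a := by simp [psi, a, ai]
lemma psi_bi : psi bi = b := by simp [psi, b, bi]
lemma psi_invol (p : Heis) : psi (psi p) = p := by simp [psi]
lemma psi_S {s : Heis} (h : s ∈ S) : psi s ∈ S := by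
  rcases mem_S_iff.mp h with rfl | rfl | rfl | rfl <;>
    simp [psi_a, psi_b, psi_ai, psi_bi, a_mem_S, b_mem_S, ai_mem_S, bi_mem_S]

/-- the word metric is invariant under letter-preserving automorphisms -/
lemma wdist_map (f : Heis → Heis) (h1 : f 1 = 1) (hm : ∀ p q, f (p * q) = f p * f q)
    (hS : ∀ s ∈ S, f s ∈ S) (hinv : ∀ p, f (f p) = p) (g : Heis) :
    wdist 1 (f g) = wdist 1 g := by
  unfold wdist
  congr 1
  ext n
  constructor
  · rintro ⟨l, hl1, hl2, hl3⟩
    refine ⟨l.map f, ?_, by simp [hl2], ?_⟩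
    · intro s hs
      obtain ⟨u, hu, rfl⟩ := List.mem_map.mp hs
      exact hS u (hl1 u hu)
    · rw [one_mul] at hl3 ⊢
      rw [prod_map_of_hom f h1 hm, hl3, hinv]
  · rintro ⟨l, hl1, hl2, hl3⟩
    refine ⟨l.map f, ?_, by simp [hl2], ?_⟩
    · intro s hs
      obtain ⟨u, hu, rfl⟩ := List.mem_map.mp hs
      exact hS u (hl1 u hu)
    · rw [one_mul] at hl3 ⊢
      rw [prod_map_of_hom f h1 hm, hl3]

lemma transfer (f : Heis → Heis) (h1 : f 1 = 1) (hm : ∀ p q, f (p * q) = f p * f q)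
    (hS : ∀ s ∈ S, f s ∈ S) (hinv : ∀ p, f (f p) = p)
    (w : ℕ → Heis) (hw : ∀ t, w t ∈ S)
    (hgeo : ∀ n : ℕ, wdist 1 (((List.range n).map w).prod) = n) :
    (∀ t, (f ∘ w) t ∈ S) ∧
      (∀ n : ℕ, wdist 1 (((List.range n).map (f ∘ w)).prod) = n) := by
  constructor
  · intro t; exact hS _ (hw t)
  · intro n
    have : (List.range n).map (f ∘ w) = ((List.range n).map w).map f := by
      rw [List.map_map]
    rw [this, prod_map_of_hom f h1 hm, wdist_map f h1 hm hS hinv]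
    exact hgeo n

lemma occ_set (f : Heis → Heis) (hinv : ∀ p, f (f p) = p) (w : ℕ → Heis) (x : Heis) :
    {τ : ℕ | (f ∘ w) τ = x} = {τ : ℕ | w τ = f x} := by
  ext τ
  simp only [Set.mem_setOf_eq, Function.comp_apply]
  constructor
  · intro h; rw [← hinv (w τ), h]
  · intro h; rw [h, hinv]

/-- dispatch when the two infinite letters are a and b -/
lemma mainA (w : ℕ → Heis) (hw : ∀ t, w t ∈ S)
    (hgeo : ∀ n : ℕ, wdist 1 (((List.range n).map w).prod) = n)
    (ha : {t : ℕ | w t = a}.Infinite) (hb : {t : ℕ | w t = b}.Infinite)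
    (hu : (∃ t, w t = ai) ∨ (∃ t, w t = bi)) : False := by
  by_cases h1 : {t : ℕ | w t = ai}.Infinite
  · exact core1 w hw hgeo ha h1
  by_cases h2 : {t : ℕ | w t = bi}.Infinite
  · obtain ⟨hw', hgeo'⟩ := transfer sig sig_one sig_mul (fun s => sig_S) sig_invol w hw hgeo
    refine core1 (sig ∘ w) hw' hgeo' ?_ ?_
    · rw [occ_set sig sig_invol w a, sig_a]; exact hb
    · rw [occ_set sig sig_invol w ai, sig_ai]; exact h2
  · refine core2 w hw hgeo ha hb h1 h2 ?_
    rcases hu with ⟨t, ht⟩ | ⟨t, ht⟩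
    exacts [⟨t, Or.inl ht⟩, ⟨t, Or.inr ht⟩]

/-- dispatch over all possible pairs of infinitely-occurring letters -/
lemma mainPair (w : ℕ → Heis) (hw : ∀ t, w t ∈ S)
    (hgeo : ∀ n : ℕ, wdist 1 (((List.range n).map w).prod) = n)
    (s t : Heis) (hsS : s ∈ S) (htS : t ∈ S) (hst : s ≠ t)
    (hsI : {τ : ℕ | w τ = s}.Infinite) (htI : {τ : ℕ | w τ = t}.Infinite)
    (hthird : ∃ u, (∃ τ, w τ = u) ∧ u ≠ s ∧ u ≠ t) : False := by
  obtain ⟨u, ⟨τu, hτu⟩, hus, hut⟩ := hthird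
  have huS : u ∈ S := hτu ▸ hw τu
  -- helper facts
  have hphiX := transfer phiX phiX_one phiX_mul (fun s => phiX_S) phiX_invol w hw hgeo
  have hphiY := transfer phiY phiY_one phiY_mul (fun s => phiY_S) phiY_invol w hw hgeo
  have hpsi := transfer psi psi_one psi_mul (fun s => psi_S) psi_invol w hw hgeo
  rcases mem_S_iff.mp hsS with rfl | rfl | rfl | rfl <;>
    rcases mem_S_iff.mp htS with rfl | rfl | rfl | rfl
  · exact hst rfl
  · -- (a, b)
    refine mainA w hw hgeo hsI htI ?_
    rcases mem_S_iff.mp huS with rfl | rfl | rfl | rfl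
    · exact absurd rfl hus
    · exact absurd rfl hut
    · exact Or.inl ⟨τu, hτu⟩
    · exact Or.inr ⟨τu, hτu⟩
  · -- (a, ai)
    exact core1 w hw hgeo hsI htI
  · -- (a, bi) : transfer phiY
    refine mainA (phiY ∘ w) hphiY.1 hphiY.2 ?_ ?_ ?_
    · rw [occ_set phiY phiY_invol w a, phiY_a]; exact hsI
    · rw [occ_set phiY phiY_invol w b, phiY_b]; exact htI
    · rcases mem_S_iff.mp huS with rfl | rfl | rfl | rfl
      · exact absurd rfl hus
      · exact Or.inr ⟨τu, by simp [Function.comp, hτu, phiY_b]⟩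
      · exact Or.inl ⟨τu, by simp [Function.comp, hτu, phiY_ai]⟩
      · exact absurd rfl hut
  · -- (b, a)
    refine mainA w hw hgeo htI hsI ?_
    rcases mem_S_iff.mp huS with rfl | rfl | rfl | rfl
    · exact absurd rfl hut
    · exact absurd rfl hus
    · exact Or.inl ⟨τu, hτu⟩
    · exact Or.inr ⟨τu, hτu⟩
  · exact hst rfl
  · -- (b, ai) : transfer phiX
    refine mainA (phiX ∘ w) hphiX.1 hphiX.2 ?_ ?_ ?_
    · rw [occ_set phiX phiX_invol w a, phiX_a]; exact htI
    · rw [occ_set phiX phiX_invol w b, phiX_b]; exact hsI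
    · rcases mem_S_iff.mp huS with rfl | rfl | rfl | rfl
      · exact Or.inl ⟨τu, by simp [Function.comp, hτu, phiX_a]⟩
      · exact absurd rfl hus
      · exact absurd rfl hut
      · exact Or.inr ⟨τu, by simp [Function.comp, hτu, phiX_bi]⟩
  · -- (b, bi) : σ then core1
    obtain ⟨hw', hgeo'⟩ := transfer sig sig_one sig_mul (fun s => sig_S) sig_invol w hw hgeo
    refine core1 (sig ∘ w) hw' hgeo' ?_ ?_
    · rw [occ_set sig sig_invol w a, sig_a]; exact hsI
    · rw [occ_set sig sig_invol w ai, sig_ai]; exact htI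
  · -- (ai, a)
    exact core1 w hw hgeo htI hsI
  · -- (ai, b)
    refine mainA (phiX ∘ w) hphiX.1 hphiX.2 ?_ ?_ ?_
    · rw [occ_set phiX phiX_invol w a, phiX_a]; exact hsI
    · rw [occ_set phiX phiX_invol w b, phiX_b]; exact htI
    · rcases mem_S_iff.mp huS with rfl | rfl | rfl | rfl
      · exact Or.inl ⟨τu, by simp [Function.comp, hτu, phiX_a]⟩
      · exact absurd rfl hut
      · exact absurd rfl hus
      · exact Or.inr ⟨τu, by simp [Function.comp, hτu, phiX_bi]⟩
  · exact hst rfl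
  · -- (ai, bi) : psi
    refine mainA (psi ∘ w) hpsi.1 hpsi.2 ?_ ?_ ?_
    · rw [occ_set psi psi_invol w a, psi_a]; exact hsI
    · rw [occ_set psi psi_invol w b, psi_b]; exact htI
    · rcases mem_S_iff.mp huS with rfl | rfl | rfl | rfl
      · exact Or.inl ⟨τu, by simp [Function.comp, hτu, psi_a]⟩
      · exact Or.inr ⟨τu, by simp [Function.comp, hτu, psi_b]⟩
      · exact absurd rfl hus
      · exact absurd rfl hut
  · -- (bi, a)
    refine mainA (phiY ∘ w) hphiY.1 hphiY.2 ?_ ?_ ?_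
    · rw [occ_set phiY phiY_invol w a, phiY_a]; exact htI
    · rw [occ_set phiY phiY_invol w b, phiY_b]; exact hsI
    · rcases mem_S_iff.mp huS with rfl | rfl | rfl | rfl
      · exact absurd rfl hut
      · exact Or.inr ⟨τu, by simp [Function.comp, hτu, phiY_b]⟩
      · exact Or.inl ⟨τu, by simp [Function.comp, hτu, phiY_ai]⟩
      · exact absurd rfl hus
  · -- (bi, b) : σ then core1
    obtain ⟨hw', hgeo'⟩ := transfer sig sig_one sig_mul (fun s => sig_S) sig_invol w hw hgeo
    refine core1 (sig ∘ w) hw' hgeo' ?_ ?_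
    · rw [occ_set sig sig_invol w a, sig_a]; exact htI
    · rw [occ_set sig sig_invol w ai, sig_ai]; exact hsI
  · -- (bi, ai) : psi
    refine mainA (psi ∘ w) hpsi.1 hpsi.2 ?_ ?_ ?_
    · rw [occ_set psi psi_invol w a, psi_a]; exact htI
    · rw [occ_set psi psi_invol w b, psi_b]; exact hsI
    · rcases mem_S_iff.mp huS with rfl | rfl | rfl | rfl
      · exact Or.inl ⟨τu, by simp [Function.comp, hτu, psi_a]⟩
      · exact Or.inr ⟨τu, by simp [Function.comp, hτu, psi_b]⟩
      · exact absurd rfl hut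
      · exact absurd rfl hus
  · exact hst rfl

lemma S_finite : S.Finite := by
  have : S = {a, b, a⁻¹, b⁻¹} := rfl
  rw [this]
  exact (((Set.finite_singleton _).insert _).insert _).insert _

end Heis


open Heis in
/-- No infinite geodesic word in `H₃` (with generating set `S = {a,b,a⁻¹,b⁻¹}`) uses three
or more elements of `S` as letters with at least two of them occurring infinitely often:
equivalently, every infinite geodesic word either draws its letters from at most two
elements of `S`, or has at most one letter occurring infinitely often (i.e. is a finite
prefix followed by a single repeated letter). -/
theorem stmt17 (w : ℕ → Heis) (hw : ∀ t : ℕ, w t ∈ S)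
    (hgeo : ∀ n : ℕ, wdist 1 (((List.range n).map w).prod) = n) :
    ¬ (3 ≤ {s : Heis | ∃ t, w t = s}.ncard ∧
        2 ≤ {s : Heis | {t : ℕ | w t = s}.Infinite}.ncard) := by
  rintro ⟨h3, h2⟩
  set used : Set Heis := {s | ∃ t, w t = s} with hused
  set infs : Set Heis := {s | {t : ℕ | w t = s}.Infinite} with hinfs
  have husedS : used ⊆ S := by rintro s ⟨t, rfl⟩; exact hw t
  have hinfsused : infs ⊆ used := by
    intro s hs
    obtain ⟨t, ht⟩ := hs.nonempty
    exact ⟨t, ht⟩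
  have husedfin : used.Finite := S_finite.subset husedS
  have hinfsfin : infs.Finite := husedfin.subset hinfsused
  obtain ⟨s, hs, t, ht, hst⟩ := (Set.one_lt_ncard hinfsfin).mp (by omega)
  have hsS : s ∈ S := husedS (hinfsused hs)
  have htS : t ∈ S := husedS (hinfsused ht)
  have hsub : ¬ (used ⊆ {s, t}) := by
    intro hsub
    have h2' : ({s, t} : Set Heis).ncard = 2 := Set.ncard_pair hst
    have := Set.ncard_le_ncard hsub ((Set.finite_singleton t).insert s)
    omega
  obtain ⟨u, huused, hu⟩ := Set.not_subset.mp hsub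
  have hu' : u ≠ s ∧ u ≠ t := by
    constructor <;> intro h <;> apply hu <;> simp [h]
  exact mainPair w hw hgeo s t hsS htS hst hs ht ⟨u, huused, hu'.1, hu'.2⟩
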